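/- For every Lebesgue-measurable set A ⊆ [0,π], the function h_A belongs to E(S¹): h_A is well defined on S¹ = ℝ/2πℤ, is 1-Lipschitz with respect to the geodesic metric, and satisfies h_A(φ) + h_A(φ+π) = π for all φ ∈ S¹. -/

import Mathlib

noncomputable section

open MeasureTheory

/-- The circle `ℝ/2πℤ` with the quotient metric (geodesic metric, circumference `2π`). -/
abbrev S1 : Type := AddCircle (2 * Real.pi)

instance : Fact (0 < 2 * Real.pi) := ⟨by positivity⟩

/-- The tight span of `S¹`: 1-Lipschitz functions with `f θ + f (θ + π) = π`. -/
def ES1 : Set (S1 → ℝ) :=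
  {f | LipschitzWith 1 f ∧ ∀ θ : S1, f θ + f (θ + ((Real.pi : ℝ) : S1)) = Real.pi}

/-- The function `h_A : S¹ → ℝ` associated to a measurable set `A ⊆ [0,π]`:
`h_A φ = (π − μ A) + 2 μ(A ∩ [0,φ]) − φ` for `φ ∈ [0,π]` and
`h_A φ = π − h_A (φ − π)` for `φ ∈ (π, 2π)`. -/
def hA (A : Set ℝ) : S1 → ℝ := fun φ =>
  let t : ℝ := (AddCircle.equivIco (2 * Real.pi) 0 φ : ℝ)
  if t ≤ Real.pi then
    (Real.pi - (volume A).toReal) + 2 * (volume (A ∩ Set.Icc 0 t)).toReal - t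
  else
    Real.pi - ((Real.pi - (volume A).toReal)
      + 2 * (volume (A ∩ Set.Icc 0 (t - Real.pi))).toReal - (t - Real.pi))

namespace HAaux

/-- `m(t) = μ(A ∩ [0,t])`. -/
def mfun (A : Set ℝ) (t : ℝ) : ℝ := (volume (A ∩ Set.Icc 0 t)).toReal

/-- `g(t) = (π − μA) + 2 m(t) − t`. -/
def gfun (A : Set ℝ) (t : ℝ) : ℝ :=
  (Real.pi - (volume A).toReal) + 2 * mfun A t - Real.pi + (Real.pi - t)

lemma gfun_def (A : Set ℝ) (t : ℝ) :
    gfun A t = (Real.pi - (volume A).toReal) + 2 * mfun A t - t := by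
  unfold gfun; ring

lemma mfun_fin (A : Set ℝ) (t : ℝ) : volume (A ∩ Set.Icc 0 t) ≠ ⊤ :=
  ne_of_lt (lt_of_le_of_lt (measure_mono Set.inter_subset_right)
    (by rw [Real.volume_Icc]; exact ENNReal.ofReal_lt_top))

lemma mfun_mono (A : Set ℝ) {t s : ℝ} (h : t ≤ s) : mfun A t ≤ mfun A s :=
  ENNReal.toReal_mono (mfun_fin A s)
    (measure_mono (Set.inter_subset_inter (subset_refl A) (Set.Icc_subset_Icc_right h)))

lemma mfun_lip (A : Set ℝ) {t s : ℝ} (h : t ≤ s) : mfun A s ≤ mfun A t + (s - t) := by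
  have hsub : A ∩ Set.Icc 0 s ⊆ (A ∩ Set.Icc 0 t) ∪ Set.Ioc t s := by
    intro z hz
    rcases le_or_gt z t with hzt | hzt
    · exact Or.inl ⟨hz.1, hz.2.1, hzt⟩
    · exact Or.inr ⟨hzt, hz.2.2⟩
  have h1 : volume (A ∩ Set.Icc 0 s) ≤ volume (A ∩ Set.Icc 0 t) + volume (Set.Ioc t s) :=
    le_trans (measure_mono hsub) (measure_union_le _ _)
  have hfin2 : volume (A ∩ Set.Icc 0 t) + volume (Set.Ioc t s) ≠ ⊤ := by
    rw [Real.volume_Ioc]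
    exact ENNReal.add_ne_top.mpr ⟨mfun_fin A t, ENNReal.ofReal_ne_top⟩
  have h2 := ENNReal.toReal_mono hfin2 h1
  rw [ENNReal.toReal_add (mfun_fin A t) (by rw [Real.volume_Ioc]; exact ENNReal.ofReal_ne_top),
    Real.volume_Ioc, ENNReal.toReal_ofReal (by linarith)] at h2
  exact h2

lemma gfun_lip_aux (A : Set ℝ) {t s : ℝ} (h : t ≤ s) : |gfun A t - gfun A s| ≤ s - t := by
  have h1 := mfun_mono A h
  have h2 := mfun_lip A h
  rw [abs_le, gfun_def, gfun_def]
  constructor <;> linarith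

lemma gfun_lip (A : Set ℝ) : LipschitzWith 1 (gfun A) := by
  apply LipschitzWith.of_dist_le_mul
  intro x y
  rw [NNReal.coe_one, one_mul, Real.dist_eq, Real.dist_eq]
  rcases le_total x y with h | h
  · rw [abs_sub_comm x y, abs_of_nonneg (sub_nonneg.mpr h)]
    exact gfun_lip_aux A h
  · rw [abs_sub_comm (gfun A x), abs_of_nonneg (sub_nonneg.mpr h)]
    exact gfun_lip_aux A h

lemma mfun_zero (A : Set ℝ) : mfun A 0 = 0 := by
  unfold mfun
  have h : volume (A ∩ Set.Icc (0:ℝ) 0) = 0 :=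
    le_antisymm (le_trans (measure_mono Set.inter_subset_right)
      (by simp)) zero_le
  rw [h]
  simp

lemma mfun_pi (A : Set ℝ) (hA' : A ⊆ Set.Icc 0 Real.pi) : mfun A Real.pi = (volume A).toReal := by
  unfold mfun
  rw [Set.inter_eq_left.mpr hA']

lemma gfun_zero (A : Set ℝ) : gfun A 0 = Real.pi - (volume A).toReal := by
  rw [gfun_def, mfun_zero]; ring

lemma gfun_pi (A : Set ℝ) (hA' : A ⊆ Set.Icc 0 Real.pi) :
    gfun A Real.pi = (volume A).toReal := by
  rw [gfun_def, mfun_pi A hA']; ring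

/-- Representative of `↑x` for `x ∈ [0, 2π)` is `x` itself. -/
lemma rep_self {x : ℝ} (h0 : 0 ≤ x) (h2 : x < 2 * Real.pi) :
    ((AddCircle.equivIco (2 * Real.pi) 0 (↑x : S1) : ℝ)) = x := by
  rw [AddCircle.coe_equivIco_mk_apply]
  rw [Int.fract_eq_self.mpr ⟨div_nonneg h0 (by positivity), (div_lt_one (by positivity)).mpr h2⟩]
  field_simp

lemma coe_rep (θ : S1) : (((AddCircle.equivIco (2 * Real.pi) 0 θ : ℝ)) : S1) = θ := by
  have h := (AddCircle.equivIco (2 * Real.pi) 0).symm_apply_apply θ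
  rwa [AddCircle.equivIco, QuotientAddGroup.equivIcoMod_symm_apply] at h

lemma rep_mem (θ : S1) :
    (AddCircle.equivIco (2 * Real.pi) 0 θ : ℝ) ∈ Set.Ico (0:ℝ) (2 * Real.pi) := by
  have := (AddCircle.equivIco (2 * Real.pi) 0 θ).2
  simpa using this

/-- `hA` read through representatives. -/
lemma hA_eq (A : Set ℝ) (θ : S1) :
    hA A θ =
      if (AddCircle.equivIco (2 * Real.pi) 0 θ : ℝ) ≤ Real.pi then
        gfun A (AddCircle.equivIco (2 * Real.pi) 0 θ : ℝ)
      else Real.pi - gfun A ((AddCircle.equivIco (2 * Real.pi) 0 θ : ℝ) - Real.pi) := by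
  unfold hA
  dsimp only
  rw [gfun_def, gfun_def]
  unfold mfun
  rfl

/-- `hA` on the real line. -/
def Fr (A : Set ℝ) (x : ℝ) : ℝ := hA A (↑x : S1)

lemma Fr_lo (A : Set ℝ) {x : ℝ} (hx : x ∈ Set.Icc 0 Real.pi) : Fr A x = gfun A x := by
  have hrep : ((AddCircle.equivIco (2 * Real.pi) 0 (↑x : S1) : ℝ)) = x :=
    rep_self hx.1 (lt_of_le_of_lt hx.2 (by nlinarith [Real.pi_pos]))
  unfold Fr
  rw [hA_eq, hrep, if_pos hx.2]

lemma Fr_hi (A : Set ℝ) (hA' : A ⊆ Set.Icc 0 Real.pi) {x : ℝ}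
    (hx : x ∈ Set.Ico Real.pi (2 * Real.pi)) :
    Fr A x = Real.pi - gfun A (x - Real.pi) := by
  have hrep : ((AddCircle.equivIco (2 * Real.pi) 0 (↑x : S1) : ℝ)) = x :=
    rep_self (le_trans Real.pi_pos.le hx.1) hx.2
  unfold Fr
  rw [hA_eq, hrep]
  by_cases h : x ≤ Real.pi
  · have hxpi : x = Real.pi := le_antisymm h hx.1
    rw [if_pos h, hxpi, gfun_pi A hA', sub_self, gfun_zero]
    ring
  · rw [if_neg h]

lemma Fr_anti (A : Set ℝ) (hA' : A ⊆ Set.Icc 0 Real.pi) (x : ℝ) :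
    Fr A (x + Real.pi) = Real.pi - Fr A x := by
  set t : ℝ := (AddCircle.equivIco (2 * Real.pi) 0 (↑x : S1) : ℝ) with ht
  have htmem := rep_mem (↑x : S1)
  have hcoe : ((t : ℝ) : S1) = (↑x : S1) := coe_rep _
  have hFx : Fr A x = Fr A t := by
    unfold Fr; rw [hcoe]
  have hFxpi : Fr A (x + Real.pi) = Fr A (t + Real.pi) := by
    unfold Fr
    have : ((x + Real.pi : ℝ) : S1) = ((t + Real.pi : ℝ) : S1) := by
      rw [AddCircle.coe_add, AddCircle.coe_add, hcoe]
    rw [this]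
  rw [hFx, hFxpi]
  rcases lt_or_ge t Real.pi with hlt | hge
  · rw [Fr_hi A hA' ⟨by linarith [htmem.1], by linarith [hlt]⟩, Fr_lo A ⟨htmem.1, hlt.le⟩]
    ring_nf
    rfl
  · have h1 : ((t + Real.pi : ℝ) : S1) = ((t - Real.pi : ℝ) : S1) := by
      have : (t + Real.pi : ℝ) = (t - Real.pi) + 2 * Real.pi := by ring
      rw [this, AddCircle.coe_add_period]
    have h2 : Fr A (t + Real.pi) = Fr A (t - Real.pi) := by
      unfold Fr; rw [h1]
    rw [h2, Fr_lo A ⟨by linarith, by linarith [htmem.2]⟩,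
      Fr_hi A hA' ⟨hge, htmem.2⟩]
    ring

lemma Fr_dist_shift (A : Set ℝ) (hA' : A ⊆ Set.Icc 0 Real.pi) (u v : ℝ) :
    dist (Fr A (u + Real.pi)) (Fr A (v + Real.pi)) = dist (Fr A u) (Fr A v) := by
  rw [Fr_anti A hA', Fr_anti A hA', Real.dist_eq, Real.dist_eq]
  rw [abs_sub_comm]
  congr 1
  ring

lemma Fr_dist_shift_int (A : Set ℝ) (hA' : A ⊆ Set.Icc 0 Real.pi) (k : ℤ) (u v : ℝ) :
    dist (Fr A (u + k * Real.pi)) (Fr A (v + k * Real.pi)) = dist (Fr A u) (Fr A v) := by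
  induction k using Int.induction_on with
  | zero => simp
  | succ k ih =>
    have e : ∀ w : ℝ, w + ((k : ℤ) + 1 : ℤ) * Real.pi = (w + (k : ℤ) * Real.pi) + Real.pi := by
      intro w; push_cast; ring
    rw [e, e, Fr_dist_shift A hA', ih]
  | pred k ih =>
    have e : ∀ w : ℝ, (w + (-(k : ℤ) - 1 : ℤ) * Real.pi) + Real.pi = w + (-(k : ℤ) : ℤ) * Real.pi := by
      intro w; push_cast; ring
    rw [← ih, ← Fr_dist_shift A hA' (u + (-(k:ℤ)-1 : ℤ) * Real.pi) (v + (-(k:ℤ)-1 : ℤ) * Real.pi),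
      e, e]

lemma Fr_lipOn_base (A : Set ℝ) : LipschitzOnWith 1 (Fr A) (Set.Icc 0 Real.pi) := by
  rw [lipschitzOnWith_iff_dist_le_mul]
  intro x hx y hy
  rw [Fr_lo A hx, Fr_lo A hy]
  exact (gfun_lip A).dist_le_mul x y

lemma Fr_lipOn_piece (A : Set ℝ) (hA' : A ⊆ Set.Icc 0 Real.pi) (k : ℤ) :
    LipschitzOnWith 1 (Fr A) (Set.Icc ((k : ℝ) * Real.pi) (((k : ℝ) + 1) * Real.pi)) := by
  rw [lipschitzOnWith_iff_dist_le_mul]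
  intro x hx y hy
  have hx' : x - k * Real.pi ∈ Set.Icc (0:ℝ) Real.pi := by
    constructor <;> [linarith [hx.1]; nlinarith [hx.2]]
  have hy' : y - k * Real.pi ∈ Set.Icc (0:ℝ) Real.pi := by
    constructor <;> [linarith [hy.1]; nlinarith [hy.2]]
  have h1 := Fr_dist_shift_int A hA' k (x - k * Real.pi) (y - k * Real.pi)
  have e1 : x - (k : ℝ) * Real.pi + (k : ℝ) * Real.pi = x := by ring
  have e2 : y - (k : ℝ) * Real.pi + (k : ℝ) * Real.pi = y := by ring
  rw [e1, e2] at h1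
  rw [h1]
  have h2 := (Fr_lipOn_base A).dist_le_mul _ hx' _ hy'
  calc dist (Fr A (x - k * Real.pi)) (Fr A (y - k * Real.pi))
      ≤ (1:NNReal) * dist (x - k * Real.pi) (y - k * Real.pi) := h2
    _ = (1:NNReal) * dist x y := by
        rw [Real.dist_eq, Real.dist_eq]
        congr 2
        ring

/-- A function that is 1-Lipschitz on every interval `[kp, (k+1)p]` is 1-Lipschitz. -/
lemma lipschitz_of_pieces {f : ℝ → ℝ} {p : ℝ} (hp : 0 < p)
    (h : ∀ k : ℤ, LipschitzOnWith 1 f (Set.Icc ((k : ℝ) * p) (((k : ℝ) + 1) * p))) :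
    LipschitzWith 1 f := by
  have hlow : ∀ x : ℝ, (⌊x / p⌋ : ℝ) * p ≤ x := by
    intro x
    have := Int.floor_le (x / p)
    calc (⌊x / p⌋ : ℝ) * p ≤ (x / p) * p := by nlinarith
      _ = x := by field_simp
  have hhigh : ∀ x : ℝ, x ≤ ((⌊x / p⌋ : ℝ) + 1) * p := by
    intro x
    have := (Int.lt_floor_add_one (x / p)).le
    calc x = (x / p) * p := by field_simp
      _ ≤ ((⌊x / p⌋ : ℝ) + 1) * p := by nlinarith
  have key : ∀ n : ℕ, ∀ x y : ℝ, x ≤ y → ⌊y / p⌋ ≤ ⌊x / p⌋ + n →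
      dist (f x) (f y) ≤ y - x := by
    intro n
    induction n with
    | zero =>
      intro x y hxy hfl
      have hfl' : ⌊x / p⌋ ≤ ⌊y / p⌋ :=
        Int.floor_le_floor (by gcongr)
      have heq : ⌊y / p⌋ = ⌊x / p⌋ := le_antisymm (by simpa using hfl) hfl'
      have hxmem : x ∈ Set.Icc ((⌊x / p⌋ : ℝ) * p) (((⌊x / p⌋ : ℝ) + 1) * p) :=
        ⟨hlow x, hhigh x⟩
      have hymem : y ∈ Set.Icc ((⌊x / p⌋ : ℝ) * p) (((⌊x / p⌋ : ℝ) + 1) * p) := by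
        rw [← heq]
        exact ⟨hlow y, hhigh y⟩
      have := (h ⌊x / p⌋).dist_le_mul _ hxmem _ hymem
      calc dist (f x) (f y) ≤ (1:NNReal) * dist x y := this
        _ = dist x y := by rw [NNReal.coe_one, one_mul]
        _ = y - x := by rw [Real.dist_eq, abs_sub_comm, abs_of_nonneg (by linarith)]
    | succ n ih =>
      intro x y hxy hfl
      by_cases hc : ⌊y / p⌋ ≤ ⌊x / p⌋ + n
      · exact ih x y hxy hc
      · push_neg at hc
        have hc' : ⌊x / p⌋ + 1 ≤ ⌊y / p⌋ := by omega
        set m : ℝ := ((⌊x / p⌋ : ℝ) + 1) * p with hm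
        have hxm : x ≤ m := hhigh x
        have hmy : m ≤ y := by
          have h1 : ((⌊x / p⌋ : ℝ) + 1) ≤ (⌊y / p⌋ : ℝ) := by exact_mod_cast hc'
          calc m ≤ (⌊y / p⌋ : ℝ) * p := by nlinarith
            _ ≤ y := hlow y
        have hmf : ⌊m / p⌋ = ⌊x / p⌋ + 1 := by
          have : m / p = ((⌊x / p⌋ + 1 : ℤ) : ℝ) := by
            field_simp [hm]
            rw [hm]; push_cast; ring
          rw [this, Int.floor_intCast]
        have hxmem : x ∈ Set.Icc ((⌊x / p⌋ : ℝ) * p) (((⌊x / p⌋ : ℝ) + 1) * p) :=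
          ⟨hlow x, hhigh x⟩
        have hmmem : m ∈ Set.Icc ((⌊x / p⌋ : ℝ) * p) (((⌊x / p⌋ : ℝ) + 1) * p) :=
          ⟨by nlinarith, le_refl _⟩
        have h1 : dist (f x) (f m) ≤ m - x := by
          have := (h ⌊x / p⌋).dist_le_mul _ hxmem _ hmmem
          calc dist (f x) (f m) ≤ (1:NNReal) * dist x m := this
            _ = dist x m := by rw [NNReal.coe_one, one_mul]
            _ = m - x := by rw [Real.dist_eq, abs_sub_comm, abs_of_nonneg (by linarith)]
        have h2 : dist (f m) (f y) ≤ y - m := by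
          apply ih m y hmy
          rw [hmf]
          omega
        calc dist (f x) (f y) ≤ dist (f x) (f m) + dist (f m) (f y) := dist_triangle _ _ _
          _ ≤ (m - x) + (y - m) := add_le_add h1 h2
          _ = y - x := by ring
  apply LipschitzWith.of_dist_le_mul
  intro x y
  rw [NNReal.coe_one, one_mul]
  rcases le_total x y with hxy | hxy
  · have h1 := key (⌊y / p⌋ - ⌊x / p⌋).toNat x y hxy (by omega)
    have hd : dist x y = y - x := by
      rw [Real.dist_eq, abs_sub_comm, abs_of_nonneg (by linarith)]
    rw [hd]
    exact h1
  · have h1 := key (⌊x / p⌋ - ⌊y / p⌋).toNat y x hxy (by omega)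
    have hd : dist x y = x - y := by
      rw [Real.dist_eq, abs_of_nonneg (by linarith)]
    rw [dist_comm, hd]
    exact h1

/-- Descend a 1-Lipschitz periodic function to the circle. -/
lemma lipschitz_descend {p : ℝ} (hp : 0 < p) {F : ℝ → ℝ} (hF : LipschitzWith 1 F)
    {f : AddCircle p → ℝ} (hlift : ∀ x : ℝ, f ↑x = F x) : LipschitzWith 1 f := by
  apply LipschitzWith.of_dist_le_mul
  intro θ₁ θ₂
  induction θ₁ using QuotientAddGroup.induction_on with
  | H x =>
  induction θ₂ using QuotientAddGroup.induction_on with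
  | H y =>
  rw [NNReal.coe_one, one_mul]
  set c : ℝ := round (p⁻¹ * (x - y)) * p with hc
  have hcoe : ((y + c : ℝ) : AddCircle p) = (y : AddCircle p) := by
    rw [QuotientAddGroup.eq_iff_sub_mem]
    have : (y + c) - y = c := by ring
    rw [this, hc, AddSubgroup.mem_zmultiples_iff]
    exact ⟨round (p⁻¹ * (x - y)), by rw [zsmul_eq_mul]⟩
  have hdist : dist ((x : ℝ) : AddCircle p) ((y : ℝ) : AddCircle p) = |x - y - c| := by
    rw [dist_eq_norm]
    have hsub : ((x : ℝ) : AddCircle p) - ((y : ℝ) : AddCircle p)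
        = ((x - y : ℝ) : AddCircle p) := by
      rw [← QuotientAddGroup.mk_sub]
    rw [hsub, AddCircle.norm_eq, hc]
  calc dist (f ↑x) (f ↑y) = dist (F x) (F (y + c)) := by
        rw [← hcoe, hlift, hlift]
    _ ≤ (1:NNReal) * dist x (y + c) := hF.dist_le_mul _ _
    _ = |x - y - c| := by rw [NNReal.coe_one, one_mul, Real.dist_eq]; congr 1; ring
    _ = dist ((x : ℝ) : AddCircle p) ((y : ℝ) : AddCircle p) := hdist.symm

end HAaux

/-- For every Lebesgue-measurable `A ⊆ [0,π]`, the function `h_A` belongs to `E(S¹)`. -/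
theorem hA_mem_ES1 (A : Set ℝ) (hA' : A ⊆ Set.Icc 0 Real.pi) (hmeas : MeasurableSet A) :
    hA A ∈ ES1 := by
  constructor
  · exact HAaux.lipschitz_descend (by positivity)
      (HAaux.lipschitz_of_pieces Real.pi_pos (HAaux.Fr_lipOn_piece A hA'))
      (fun x => rfl)
  · intro θ
    induction θ using QuotientAddGroup.induction_on with
    | H x =>
    have h1 : ((x : ℝ) : S1) + ((Real.pi : ℝ) : S1) = ((x + Real.pi : ℝ) : S1) := by
      rw [← AddCircle.coe_add]
    rw [h1]
    have := HAaux.Fr_anti A hA' x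
    unfold HAaux.Fr at this
    rw [this]
    ring

end
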